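/- Let r ≥ 1 be an integer, a ∈ ℝ, h > 0, and consider the uniform nodes x_k = a + k·h. Let f : ℝ → ℝ, fix an index i, and set x_{i-1/2} = a + (i − 1/2)·h. Let p_0^{2r-1} be the Lagrange interpolant of f on the 2r nodes {x_{i-r}, …, x_{i+r-1}}, and for each k = 0, …, r−1 let p_k^r be the Lagrange interpolant of f on the r+1 nodes {x_{i-r+k}, …, x_{i+k}}. Then p_0^{2r-1}(x_{i-1/2}) = Σ_{k=0}^{r-1} C_k^r · p_k^r(x_{i-1/2}), where C_k^r = (1/2^{2r-1})·binom(2r, 2k+1). -/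

import Mathlib

open Finset

lemma prodCastFact (n : ℕ) : ∏ j ∈ Finset.range n, ((j:ℝ) + 1) = n.factorial := by
  induction n with
  | zero => simp
  | succ n ih => rw [prod_range_succ, ih, Nat.factorial_succ]; push_cast; ring

noncomputable def QQ (n : ℕ) : ℝ := ∏ t ∈ Finset.range n, ((t:ℝ) + 1/2)

lemma QQ_eq (n : ℕ) : QQ n = (2*n).factorial / (2^(2*n) * n.factorial) := by
  induction n with
  | zero => simp [QQ]
  | succ n ih =>
    rw [QQ, prod_range_succ, ← QQ, ih]
    rw [show 2*(n+1) = (2*n+1)+1 by ring, Nat.factorial_succ, Nat.factorial_succ,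
      Nat.factorial_succ]
    have h1 : ((2*n).factorial : ℝ) ≠ 0 := Nat.cast_ne_zero.mpr (Nat.factorial_ne_zero _)
    have h2 : ((n).factorial : ℝ) ≠ 0 := Nat.cast_ne_zero.mpr (Nat.factorial_ne_zero _)
    have h3 : (2:ℝ)^(2*n) ≠ 0 := by positivity
    push_cast
    field_simp
    ring

lemma eraseDenom (n u : ℕ) (hu : u < n) :
    ∏ s ∈ (Finset.range n).erase u, ((u:ℝ) - s) =
      (-1)^(n-1-u) * u.factorial * (n-1-u).factorial := by
  have hsplit : (Finset.range n).erase u = Finset.range u ∪ Finset.Ico (u+1) n := by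
    ext s
    simp only [mem_erase, mem_range, mem_union, mem_Ico]
    omega
  have hdisj : Disjoint (Finset.range u) (Finset.Ico (u+1) n) := by
    simp only [disjoint_left, mem_range, mem_Ico]
    omega
  rw [hsplit, Finset.prod_union hdisj]
  have h1 : ∏ s ∈ Finset.range u, ((u:ℝ) - s) = u.factorial := by
    rw [← Finset.prod_range_reflect, ← prodCastFact u]
    apply Finset.prod_congr rfl
    intro j hj
    simp only [mem_range] at hj
    have h : (↑(u - 1 - j) : ℝ) = (u:ℝ) - 1 - j := by
      have : ((u - 1 - j : ℕ) : ℤ) = (u:ℤ) - 1 - j := by omega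
      exact_mod_cast congrArg (fun z : ℤ => (z:ℝ)) this
    rw [h]; ring
  have h2 : ∏ s ∈ Finset.Ico (u+1) n, ((u:ℝ) - s) =
      (-1)^(n-1-u) * (n-1-u).factorial := by
    rw [Finset.prod_Ico_eq_prod_range]
    have he : ∀ j ∈ Finset.range (n - (u+1)), ((u:ℝ) - (u+1+j:ℕ)) = (-1) * ((j:ℝ)+1) := by
      intro j hj
      push_cast
      ring
    rw [Finset.prod_congr rfl he, Finset.prod_mul_distrib, Finset.prod_const,
      prodCastFact, Finset.card_range, show n - (u+1) = n-1-u by omega]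
  rw [h1, h2]; ring

lemma halfNe (r u : ℕ) : ((r:ℝ) - 1/2 - u) ≠ 0 := by
  intro h0
  have h : ((2*r : ℕ) : ℝ) = ((2*u+1 : ℕ) : ℝ) := by push_cast; linarith
  have := Nat.cast_inj (R := ℝ).mp h
  omega

lemma eraseNum (n u : ℕ) (hu : u < n) (c : ℝ) (hc : c - u ≠ 0) :
    ∏ s ∈ (Finset.range n).erase u, (c - s) = (∏ s ∈ Finset.range n, (c - s)) / (c - u) := by
  rw [← Finset.mul_prod_erase _ _ (Finset.mem_range.mpr hu), mul_div_cancel_left₀ _ hc]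

lemma prodBig (r : ℕ) : ∏ s ∈ Finset.range (2*r), ((r:ℝ) - 1/2 - s) = (-1)^r * (QQ r)^2 := by
  have hsplit : Finset.range (2*r) = Finset.range r ∪ Finset.Ico r (2*r) := by
    ext s; simp only [mem_range, mem_union, mem_Ico]; omega
  have hdisj : Disjoint (Finset.range r) (Finset.Ico r (2*r)) := by
    simp only [disjoint_left, mem_range, mem_Ico]; omega
  rw [hsplit, Finset.prod_union hdisj]
  have h1 : ∏ s ∈ Finset.range r, ((r:ℝ) - 1/2 - s) = QQ r := by
    rw [← Finset.prod_range_reflect, QQ]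
    apply Finset.prod_congr rfl
    intro j hj
    simp only [mem_range] at hj
    have h : ((r - 1 - j : ℕ) : ℝ) = (r:ℝ) - 1 - j := by
      have : ((r - 1 - j : ℕ) : ℤ) = (r:ℤ) - 1 - j := by omega
      exact_mod_cast congrArg (fun z : ℤ => (z:ℝ)) this
    rw [h]; ring
  have h2 : ∏ s ∈ Finset.Ico r (2*r), ((r:ℝ) - 1/2 - s) = (-1)^r * QQ r := by
    rw [Finset.prod_Ico_eq_prod_range, show 2*r - r = r by omega]
    have he : ∀ j ∈ Finset.range r, ((r:ℝ) - 1/2 - (r+j:ℕ)) = (-1) * ((j:ℝ)+1/2) := by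
      intro j hj; push_cast; ring
    rw [Finset.prod_congr rfl he, Finset.prod_mul_distrib, Finset.prod_const, ← QQ,
      Finset.card_range]
  rw [h1, h2]; ring

lemma prodSmall (r k : ℕ) (hk : k < r) :
    ∏ s ∈ Finset.range (r+1), ((r:ℝ) - k - 1/2 - s) = (-1)^(k+1) * QQ (r-k) * QQ (k+1) := by
  have hsplit : Finset.range (r+1) = Finset.range (r-k) ∪ Finset.Ico (r-k) (r+1) := by
    ext s; simp only [mem_range, mem_union, mem_Ico]; omega
  have hdisj : Disjoint (Finset.range (r-k)) (Finset.Ico (r-k) (r+1)) := by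
    simp only [disjoint_left, mem_range, mem_Ico]; omega
  rw [hsplit, Finset.prod_union hdisj]
  have h1 : ∏ s ∈ Finset.range (r-k), ((r:ℝ) - k - 1/2 - s) = QQ (r-k) := by
    rw [← Finset.prod_range_reflect, QQ]
    apply Finset.prod_congr rfl
    intro j hj
    simp only [mem_range] at hj
    have h : ((r - k - 1 - j : ℕ) : ℝ) = (r:ℝ) - k - 1 - j := by
      have : ((r - k - 1 - j : ℕ) : ℤ) = (r:ℤ) - k - 1 - j := by omega
      exact_mod_cast congrArg (fun z : ℤ => (z:ℝ)) this
    rw [h]; ring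
  have h2 : ∏ s ∈ Finset.Ico (r-k) (r+1), ((r:ℝ) - k - 1/2 - s) = (-1)^(k+1) * QQ (k+1) := by
    rw [Finset.prod_Ico_eq_prod_range, show r + 1 - (r-k) = k+1 by omega]
    have he : ∀ j ∈ Finset.range (k+1), ((r:ℝ) - k - 1/2 - (r-k+j:ℕ)) = (-1) * ((j:ℝ)+1/2) := by
      intro j hj
      have h : ((r - k + j : ℕ) : ℝ) = (r:ℝ) - k + j := by
        have : ((r - k + j : ℕ) : ℤ) = (r:ℤ) - k + j := by omega
        exact_mod_cast congrArg (fun z : ℤ => (z:ℝ)) this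
      rw [h]; ring
    rw [Finset.prod_congr rfl he, Finset.prod_mul_distrib, Finset.prod_const, ← QQ,
      Finset.card_range]
  rw [h1, h2]; ring


/-- Value at `y` of the Lagrange interpolant of `f` on the nodes `{x k : k ∈ s}`. -/
noncomputable def lagEval (s : Finset ℤ) (x : ℤ → ℝ) (f : ℝ → ℝ) (y : ℝ) : ℝ :=
  ∑ k ∈ s, f (x k) * ∏ m ∈ s.erase k, (y - x m) / (x k - x m)

lemma lagShift (a h : ℝ) (hh : 0 < h) (f : ℝ → ℝ) (i : ℤ) (x : ℤ → ℝ)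
    (hx : ∀ m : ℤ, x m = a + (m : ℝ) * h) (xh : ℝ)
    (hxh : xh = a + ((i : ℝ) - 1 / 2) * h)
    (b : ℤ) (n : ℕ) (c : ℝ) (hc : c = (i:ℝ) - 1/2 - (b:ℝ)) :
    lagEval (Finset.Icc b (b + n - 1)) x f xh =
      ∑ u ∈ Finset.range n, f (x (b + u)) *
        ∏ s ∈ (Finset.range n).erase u, (c - s) / ((u:ℝ) - s) := by
  set e : ℕ ↪ ℤ := ⟨fun s => b + s, show Function.Injective (fun s : ℕ => b + (s:ℤ)) from fun p q hpq => by simpa using hpq⟩ with he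
  have hmap : (Finset.range n).map e = Finset.Icc b (b + n - 1) := by
    ext m
    simp only [he, Finset.mem_map, Function.Embedding.coeFn_mk, Finset.mem_range,
      Finset.mem_Icc]
    constructor
    · rintro ⟨s, hs, rfl⟩; omega
    · intro hm; exact ⟨(m - b).toNat, by omega, by omega⟩
  rw [lagEval, ← hmap, Finset.sum_map]
  apply Finset.sum_congr rfl
  intro u hu
  congr 1
  rw [← Finset.map_erase, Finset.prod_map]
  apply Finset.prod_congr rfl
  intro s hs
  simp only [he, Function.Embedding.coeFn_mk]
  have h1 : xh - x (b + s) = (c - s) * h := by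
    rw [hx, hxh, hc]; push_cast; ring
  have h2 : x (b + u) - x (b + s) = ((u:ℝ) - s) * h := by
    rw [hx, hx]; push_cast; ring
  rw [h1, h2, mul_div_mul_right _ _ hh.ne']


lemma vdm (r u : ℕ) (hr : 1 ≤ r) (hu : u < 2*r) :
    ∑ k ∈ Finset.range r,
        (if k ≤ u ∧ u ≤ k + r then (r-1).choose k * r.choose (u-k) else 0) =
      (2*r-1).choose u := by
  have hrw : 2*r-1 = (r-1) + r := by omega
  rw [hrw, Nat.add_choose_eq, Finset.Nat.sum_antidiagonal_eq_sum_range_succ_mk]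
  -- extend LHS from range r to range (2*r)
  have h1 : ∑ k ∈ Finset.range r,
        (if k ≤ u ∧ u ≤ k + r then (r-1).choose k * r.choose (u-k) else 0) =
      ∑ k ∈ Finset.range (2*r),
        (if k ≤ u ∧ u ≤ k + r then (r-1).choose k * r.choose (u-k) else 0) := by
    apply Finset.sum_subset
    · apply Finset.range_subset_range.mpr; omega
    · intro k hk hk'
      simp only [mem_range] at hk hk'
      split_ifs with hcond
      · rw [Nat.choose_eq_zero_of_lt (by omega : r-1 < k), zero_mul]
      · rfl
  rw [h1]
  have h2 : ∑ k ∈ Finset.range (u+1), (r-1).choose k * r.choose (u-k) =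
      ∑ k ∈ Finset.range (u+1),
        (if k ≤ u ∧ u ≤ k + r then (r-1).choose k * r.choose (u-k) else 0) := by
    apply Finset.sum_congr rfl
    intro k hk
    simp only [mem_range] at hk
    split_ifs with hcond
    · rfl
    · have hlt : r < u - k := by omega
      rw [Nat.choose_eq_zero_of_lt hlt, mul_zero]
  rw [h2]
  apply (Finset.sum_subset ?_ ?_).symm
  · apply Finset.range_subset_range.mpr; omega
  · intro k hk hk'
    simp only [mem_range] at hk hk'
    have : ¬ (k ≤ u ∧ u ≤ k + r) := by omega
    simp [this]




lemma lhsEval (r u : ℕ) (hr : 1 ≤ r) (hu : u < 2*r) (w : ℝ) (hw : w ≠ 0) :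
    ((-1)^r * (QQ r)^2 / w) / ((-1)^(2*r-1-u) * u.factorial * (2*r-1-u).factorial) =
      ((-1)^(r+u+1) * (2*r).factorial / (2^(4*r-1) * (r-1).factorial * r.factorial * w)) *
        ((2*r-1).choose u) := by
  obtain ⟨v, hv1, hv2⟩ : ∃ v, 2*r-1-u = v ∧ u + v = 2*r-1 := ⟨2*r-1-u, rfl, by omega⟩
  rw [Nat.cast_choose ℝ (by omega : u ≤ 2*r-1), hv1, QQ_eq]
  have hsign : ((-1:ℝ))^r = (-1)^(r+u+1) * (-1)^v := by
    rw [← pow_add, show (r+u+1)+v = r + 2*r by omega, pow_add, pow_mul]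
    norm_num
  rw [hsign]
  rw [show (2*r).factorial = (2*r) * (2*r-1).factorial by
    rw [show 2*r = (2*r-1)+1 by omega, Nat.factorial_succ]; simp]
  rw [show r.factorial = r * (r-1).factorial by
    rw [show r = (r-1)+1 by omega, Nat.factorial_succ]; simp]
  rw [show 2^(4*r-1) = ((2:ℝ))^(4*r-1) from rfl]
  have e1 : ((2:ℝ)^(2*r))^2 = 2 * 2^(4*r-1) := by
    rw [← pow_mul, show (2:ℝ)*2^(4*r-1) = 2^((4*r-1)+1) by rw [pow_succ]; ring,
      show (4*r-1)+1 = 2*r*2 by omega]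
  have n1 : ((2*r-1).factorial : ℝ) ≠ 0 := Nat.cast_ne_zero.mpr (Nat.factorial_ne_zero _)
  have n2 : ((r-1).factorial : ℝ) ≠ 0 := Nat.cast_ne_zero.mpr (Nat.factorial_ne_zero _)
  have n3 : (u.factorial : ℝ) ≠ 0 := Nat.cast_ne_zero.mpr (Nat.factorial_ne_zero _)
  have n4 : (v.factorial : ℝ) ≠ 0 := Nat.cast_ne_zero.mpr (Nat.factorial_ne_zero _)
  have n5 : (2:ℝ)^(4*r-1) ≠ 0 := by positivity
  have n6 : (2:ℝ)^(2*r) ≠ 0 := by positivity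
  have n7 : ((-1:ℝ))^v ≠ 0 := by
    intro h; have := pow_eq_zero_iff (n := v) (by intro h0; rw [h0] at h; simp at h) |>.mp h
    norm_num at this
  have n8 : (r:ℝ) ≠ 0 := Nat.cast_ne_zero.mpr (by omega)
  push_cast
  field_simp
  ring_nf
  rw [show (2:ℝ)^(r*4-1) = 2^(r*4)/2 from by
    rw [eq_div_iff (by norm_num : (2:ℝ) ≠ 0), ← pow_succ, show r*4-1+1 = r*4 by omega]]
  ring




lemma negOnePowCongr (a b : ℕ) (h : a % 2 = b % 2) : ((-1:ℝ))^a = (-1)^b := by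
  rcases Nat.even_or_odd a with ha | ha
  · rw [ha.neg_one_pow, (Nat.even_iff.mpr (by rw [← h]; exact Nat.even_iff.mp ha)).neg_one_pow]
  · rw [ha.neg_one_pow, (Nat.odd_iff.mpr (by rw [← h]; exact Nat.odd_iff.mp ha)).neg_one_pow]

lemma termEval (r k u : ℕ) (hk : k < r) (hku : k ≤ u) (huk : u ≤ k + r) (w : ℝ) (hw : w ≠ 0) :
    ((Nat.choose (2*r) (2*k+1) : ℝ) / 2^(2*r-1)) *
      (((-1)^(k+1) * QQ (r-k) * QQ (k+1) / w) /
        ((-1)^(r-(u-k)) * (u-k).factorial * (r-(u-k)).factorial)) =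
      ((-1)^(r+u+1) * (2*r).factorial / (2^(4*r-1) * (r-1).factorial * r.factorial * w)) *
        (((r-1).choose k : ℝ) * (r.choose (u-k) : ℝ)) := by
  obtain ⟨m, rfl⟩ : ∃ m, r = k + m + 1 := ⟨r - k - 1, by omega⟩
  obtain ⟨d, rfl⟩ : ∃ d, u = k + d := ⟨u - k, by omega⟩
  rw [show k + d - k = d by omega]
  obtain ⟨e, he, hde⟩ : ∃ e, k + m + 1 - d = e ∧ d + e = k + m + 1 :=
    ⟨k + m + 1 - d, rfl, by omega⟩
  rw [he, show k + m + 1 - k = m + 1 by omega, show k + m + 1 - 1 = k + m by omega]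
  rw [Nat.cast_choose ℝ (by omega : 2*k+1 ≤ 2*(k+m+1)),
      Nat.cast_choose ℝ (by omega : k ≤ k+m),
      Nat.cast_choose ℝ (by omega : d ≤ k+m+1)]
  rw [show 2*(k+m+1) - (2*k+1) = 2*m+1 by omega, show k + m - k = m by omega, he]
  rw [QQ_eq, QQ_eq]
  rw [show 2*(m+1) = (2*m+1)+1 by ring, show 2*(k+1) = (2*k+1)+1 by ring,
      Nat.factorial_succ ((2*m+1)), Nat.factorial_succ ((2*k+1)),
      Nat.factorial_succ m, Nat.factorial_succ k, Nat.factorial_succ (k+m)]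
  have hsign : ((-1:ℝ))^(k+1) = (-1)^(k+m+1+(k+d)+1) * (-1)^e := by
    rw [← pow_add]
    exact negOnePowCongr _ _ (by omega)
  rw [hsign]
  rw [show 2*(k+m+1)-1 = 2*(k+m)+1 by omega, show 4*(k+m+1)-1 = 4*(k+m)+3 by omega]
  have n1 : ((2*m+1).factorial : ℝ) ≠ 0 := Nat.cast_ne_zero.mpr (Nat.factorial_ne_zero _)
  have n2 : ((2*k+1).factorial : ℝ) ≠ 0 := Nat.cast_ne_zero.mpr (Nat.factorial_ne_zero _)
  have n3 : (m.factorial : ℝ) ≠ 0 := Nat.cast_ne_zero.mpr (Nat.factorial_ne_zero _)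
  have n4 : (k.factorial : ℝ) ≠ 0 := Nat.cast_ne_zero.mpr (Nat.factorial_ne_zero _)
  have n5 : (d.factorial : ℝ) ≠ 0 := Nat.cast_ne_zero.mpr (Nat.factorial_ne_zero _)
  have n6 : (e.factorial : ℝ) ≠ 0 := Nat.cast_ne_zero.mpr (Nat.factorial_ne_zero _)
  have n7 : ((k+m).factorial : ℝ) ≠ 0 := Nat.cast_ne_zero.mpr (Nat.factorial_ne_zero _)
  have n8 : ((-1:ℝ))^e ≠ 0 := by apply pow_ne_zero; norm_num
  have n9 : (2:ℝ)^(2*(k+m)+1) ≠ 0 := by positivity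
  have n10 : (2:ℝ)^(4*(k+m)+3) ≠ 0 := by positivity
  have n11 : (2:ℝ)^((2*m+1)+1) ≠ 0 := by positivity
  have n12 : (2:ℝ)^((2*k+1)+1) ≠ 0 := by positivity
  push_cast
  field_simp
  ring

lemma key (r u : ℕ) (hr : 1 ≤ r) (hu : u < 2*r) :
    ∏ s ∈ (Finset.range (2*r)).erase u, (((r:ℝ) - 1/2) - s) / ((u:ℝ) - s) =
      ∑ k ∈ Finset.range r,
        (if k ≤ u ∧ u ≤ k + r then
          ((Nat.choose (2*r) (2*k+1) : ℝ) / 2^(2*r-1)) *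
            ∏ s ∈ (Finset.range (r+1)).erase (u-k),
              ((r:ℝ) - k - 1/2 - s) / (((u-k : ℕ):ℝ) - s)
        else 0) := by
  set w : ℝ := (r:ℝ) - 1/2 - u with hwdef
  have hw : w ≠ 0 := halfNe r u
  rw [Finset.prod_div_distrib, eraseNum (2*r) u hu _ hw, prodBig, eraseDenom (2*r) u hu,
    lhsEval r u hr hu w hw]
  rw [show ((2*r-1).choose u : ℝ) = ∑ k ∈ Finset.range r,
      (if k ≤ u ∧ u ≤ k + r then (((r-1).choose k : ℝ) * (r.choose (u-k) : ℝ)) else 0) from by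
    rw [← vdm r u hr hu]; push_cast; rfl]
  rw [Finset.mul_sum]
  apply Finset.sum_congr rfl
  intro k hk
  simp only [mem_range] at hk
  by_cases hcond : k ≤ u ∧ u ≤ k + r
  · rw [if_pos hcond, if_pos hcond]
    obtain ⟨h1, h2⟩ := hcond
    have hlt : u - k < r + 1 := by omega
    have hcast : ((u-k : ℕ):ℝ) = (u:ℝ) - k := by
      push_cast [Nat.cast_sub h1]; ring
    have hwk : (r:ℝ) - k - 1/2 - ((u-k : ℕ):ℝ) = w := by
      rw [hcast, hwdef]; ring
    rw [Finset.prod_div_distrib, eraseNum (r+1) (u-k) hlt _ (hwk ▸ hw), prodSmall r k hk,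
      eraseDenom (r+1) (u-k) hlt, show (r+1)-1-(u-k) = r - (u-k) by omega, hwk]
    exact (termEval r k u hk h1 h2 w hw).symm
  · rw [if_neg hcond, if_neg hcond, mul_zero]

theorem stmt2 (r : ℕ) (hr : 1 ≤ r) (a h : ℝ) (hh : 0 < h) (f : ℝ → ℝ) (i : ℤ)
    (x : ℤ → ℝ) (hx : ∀ m : ℤ, x m = a + (m : ℝ) * h)
    (xh : ℝ) (hxh : xh = a + ((i : ℝ) - 1 / 2) * h) :
    lagEval (Finset.Icc (i - r) (i + r - 1)) x f xh =
      ∑ k ∈ Finset.range r,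
        ((Nat.choose (2 * r) (2 * k + 1) : ℝ) / 2 ^ (2 * r - 1)) *
          lagEval (Finset.Icc (i - r + k) (i + k)) x f xh := by
  have hset1 : Finset.Icc (i - r) (i + r - 1) =
      Finset.Icc (i - (r:ℕ)) ((i - (r:ℕ)) + ((2*r : ℕ) : ℤ) - 1) := by
    congr 1; push_cast; ring
  rw [hset1, lagShift a h hh f i x hx xh hxh (i - (r:ℕ)) (2*r) ((r:ℝ) - 1/2)
    (by push_cast; ring)]
  have hsmall : ∀ k ∈ Finset.range r,
      lagEval (Finset.Icc (i - r + k) (i + k)) x f xh =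
        ∑ u ∈ Finset.range (2*r), (if k ≤ u ∧ u ≤ k + r then
          f (x (i - (r:ℕ) + (u:ℕ))) * ∏ s ∈ (Finset.range (r+1)).erase (u-k),
            ((r:ℝ) - k - 1/2 - s) / (((u-k : ℕ):ℝ) - s) else 0) := by
    intro k hk
    simp only [mem_range] at hk
    have hset2 : Finset.Icc (i - r + k) (i + k) =
        Finset.Icc (i - (r:ℕ) + (k:ℕ)) ((i - (r:ℕ) + (k:ℕ)) + ((r+1 : ℕ):ℤ) - 1) := by
      congr 1; push_cast; ring
    rw [hset2, lagShift a h hh f i x hx xh hxh _ (r+1) ((r:ℝ) - k - 1/2)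
      (by push_cast; ring)]
    have hGcongr : ∀ v ∈ Finset.range (r+1),
        f (x (i - (r:ℕ) + (k:ℕ) + v)) *
          ∏ s ∈ (Finset.range (r+1)).erase v, ((r:ℝ) - k - 1/2 - s)/((v:ℝ) - s)
        = f (x (i - (r:ℕ) + ((k+v : ℕ):ℤ))) *
          ∏ s ∈ (Finset.range (r+1)).erase ((k+v)-k),
            ((r:ℝ) - k - 1/2 - s)/((((k+v)-k : ℕ):ℝ) - s) := by
      intro v hv
      rw [show (k+v)-k = v by omega]
      congr 3
      push_cast; ring
    calc ∑ v ∈ Finset.range (r+1), f (x (i - (r:ℕ) + (k:ℕ) + v)) *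
          ∏ s ∈ (Finset.range (r+1)).erase v, ((r:ℝ) - k - 1/2 - s)/((v:ℝ) - s)
        = ∑ u ∈ Finset.Ico k (k+(r+1)), f (x (i - (r:ℕ) + (u:ℕ))) *
            ∏ s ∈ (Finset.range (r+1)).erase (u-k),
              ((r:ℝ) - k - 1/2 - s) / (((u-k : ℕ):ℝ) - s) := by
          rw [Finset.sum_Ico_eq_sum_range, show k+(r+1)-k = r+1 by omega]
          exact Finset.sum_congr rfl hGcongr
      _ = ∑ u ∈ Finset.range (2*r), (if u ∈ Finset.Ico k (k+(r+1)) then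
            f (x (i - (r:ℕ) + (u:ℕ))) * ∏ s ∈ (Finset.range (r+1)).erase (u-k),
              ((r:ℝ) - k - 1/2 - s) / (((u-k : ℕ):ℝ) - s) else 0) := by
          rw [Finset.sum_ite_mem, Finset.inter_eq_right.mpr ?_]
          intro u hu
          simp only [Finset.mem_Ico, Finset.mem_range] at *
          omega
      _ = _ := by
          apply Finset.sum_congr rfl
          intro u hu
          apply if_congr _ rfl rfl
          simp only [Finset.mem_Ico]
          omega
  trans (∑ k ∈ Finset.range r, ∑ u ∈ Finset.range (2*r),
      ((Nat.choose (2*r) (2*k+1) : ℝ) / 2^(2*r-1)) * (if k ≤ u ∧ u ≤ k + r then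
        f (x (i - (r:ℕ) + (u:ℕ))) * ∏ s ∈ (Finset.range (r+1)).erase (u-k),
          ((r:ℝ) - k - 1/2 - s) / (((u-k : ℕ):ℝ) - s) else 0))
  · rw [Finset.sum_comm]
    apply Finset.sum_congr rfl
    intro u hu
    simp only [mem_range] at hu
    rw [key r u hr hu, Finset.mul_sum]
    apply Finset.sum_congr rfl
    intro k hk
    split_ifs with hcond
    · ring
    · simp
  · apply Finset.sum_congr rfl
    intro k hk
    rw [hsmall k hk, Finset.mul_sum]
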